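/- arXiv:1606.02262 — 2 statements merged into one kernel-verified Lean document; each statement's English description precedes it below -/
import Mathlib

section
/- Let k be an algebraically closed field and let p ⊆ q be standard parabolic subalgebras of gl_n(k). If the commuting variety C(p) is irreducible (in the Zariski topology on p × p), then the commuting variety C(q) is irreducible (in the Zariski topology on q × q). -/
open MvPolynomial

/-- Index set for the entries of the standard parabolic subalgebra of block upper triangular
matrices determined by the (monotone) block-index function `b : Fin n → ℕ`: pairs `(i,j)`
with `b i ≤ b j`. -/
abbrev PIdx (n : ℕ) (b : Fin n → ℕ) : Type := {q : Fin n × Fin n // b q.1 ≤ b q.2}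

/-- The coordinate ring of the affine space `p × p` for the standard parabolic subalgebra `p`
determined by `b`. -/
abbrev Rp (k : Type*) [Field k] (n : ℕ) (b : Fin n → ℕ) :=
  MvPolynomial (PIdx n b ⊕ PIdx n b) k

/-- The first (block upper triangular) matrix corresponding to a point of `p × p`. -/
def pMatX (k : Type*) [Field k] {n : ℕ} {b : Fin n → ℕ} (x : PIdx n b ⊕ PIdx n b → k) :
    Matrix (Fin n) (Fin n) k :=
  fun i j => if h : b i ≤ b j then x (Sum.inl ⟨(i, j), h⟩) else 0

/-- The second (block upper triangular) matrix corresponding to a point of `p × p`. -/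
def pMatY (k : Type*) [Field k] {n : ℕ} {b : Fin n → ℕ} (x : PIdx n b ⊕ PIdx n b → k) :
    Matrix (Fin n) (Fin n) k :=
  fun i j => if h : b i ≤ b j then x (Sum.inr ⟨(i, j), h⟩) else 0

/-- The commuting variety `C(p) = {(X,Y) ∈ p × p : XY = YX}` of the standard parabolic
subalgebra `p` of `gl_n(k)` determined by `b`, as a set of points of the affine space
`p × p`. -/
def Cp (k : Type*) [Field k] (n : ℕ) (b : Fin n → ℕ) : Set (PIdx n b ⊕ PIdx n b → k) :=
  {x | pMatX k x * pMatY k x = pMatY k x * pMatX k x}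

set_option maxHeartbeats 1000000
set_option synthInstance.maxHeartbeats 400000

section Part1
variable {k : Type*} [Field k]

lemma my_mem_vI {σ : Type*} {V : Set (σ → k)} {p : MvPolynomial σ k} :
    p ∈ vanishingIdeal k V ↔ ∀ x ∈ V, eval x p = 0 := Iff.rfl

lemma my_eval_aeval {σ τ : Type*} (v : τ → k) (g : σ → MvPolynomial τ k)
    (P : MvPolynomial σ k) :
    eval v (aeval g P) = eval (fun s => eval v (g s)) P := by
  induction P using MvPolynomial.induction_on with
  | C a => simp only [aeval_C, eval_C]; simp
  | add p q hp hq => simp only [map_add, hp, hq]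
  | mul_X p i hp => simp only [map_mul, aeval_X, eval_X, hp]

lemma my_vanishingIdeal_image {σ τ : Type*} (g : σ → MvPolynomial τ k) (D : Set (τ → k)) :
    vanishingIdeal k ((fun u s => eval u (g s)) '' D) =
      Ideal.comap (aeval g : MvPolynomial σ k →ₐ[k] MvPolynomial τ k).toRingHom
        (vanishingIdeal k D) := by
  ext P
  simp only [my_mem_vI, Ideal.mem_comap, Set.mem_image]
  constructor
  · intro h u hu
    have := h (fun s => eval u (g s)) ⟨u, hu, rfl⟩
    rwa [show ((aeval g : MvPolynomial σ k →ₐ[k] MvPolynomial τ k).toRingHom P : MvPolynomial τ k) = aeval g P from rfl, my_eval_aeval]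
  · rintro h x ⟨u, hu, rfl⟩
    rw [← my_eval_aeval]
    exact h u hu

lemma my_cylinder_prime {σ₁ σ₂ : Type*} [Infinite k] {S : Set (σ₂ → k)}
    (hS : (vanishingIdeal k S).IsPrime) :
    (vanishingIdeal k {u : σ₁ ⊕ σ₂ → k | (u ∘ Sum.inr) ∈ S}).IsPrime := by
  set D : Set (σ₁ ⊕ σ₂ → k) := {u | (u ∘ Sum.inr) ∈ S} with hD
  have hSne : S.Nonempty := by
    by_contra h
    rw [Set.not_nonempty_iff_eq_empty] at h
    exact hS.ne_top (Ideal.eq_top_iff_one _ |>.2 (by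
      rw [my_mem_vI]; intro x hx; simp [h] at hx))
  obtain ⟨x0, hx0⟩ := hSne
  have key : ∀ (a : σ₁ → k) (R : MvPolynomial (σ₁ ⊕ σ₂) k) (w : σ₂ → k),
      eval w (aeval (Sum.elim (fun s => (C (a s) : MvPolynomial σ₂ k)) X) R)
        = eval (Sum.elim a w) R := by
    intro a R w
    rw [my_eval_aeval]
    have : (fun s => eval w (Sum.elim (fun s => (C (a s) : MvPolynomial σ₂ k)) X s))
        = Sum.elim a w := by funext s; cases s <;> simp
    rw [this]
  have key2 : ∀ (w : σ₂ → k) (R : MvPolynomial (σ₁ ⊕ σ₂) k) (a : σ₁ → k),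
      eval a (aeval (Sum.elim X (fun s => (C (w s) : MvPolynomial σ₁ k))) R)
        = eval (Sum.elim a w) R := by
    intro w R a
    rw [my_eval_aeval]
    have : (fun s => eval a (Sum.elim X (fun s => (C (w s) : MvPolynomial σ₁ k)) s))
        = Sum.elim a w := by funext s; cases s <;> simp
    rw [this]
  constructor
  · intro htop
    have h1 : (1 : MvPolynomial (σ₁ ⊕ σ₂) k) ∈ vanishingIdeal k D := htop ▸ Submodule.mem_top
    rw [my_mem_vI] at h1
    have := h1 (Sum.elim 0 x0) hx0
    simp at this
  · intro P Q hPQ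
    by_contra hcon
    push_neg at hcon
    obtain ⟨hP, hQ⟩ := hcon
    rw [my_mem_vI] at hP hQ hPQ
    push_neg at hP hQ
    obtain ⟨u₁, hu₁D, hu₁⟩ := hP
    obtain ⟨u₂, hu₂D, hu₂⟩ := hQ
    have hu₁e : u₁ = Sum.elim (u₁ ∘ Sum.inl) (u₁ ∘ Sum.inr) := by funext s; cases s <;> rfl
    have hu₂e : u₂ = Sum.elim (u₂ ∘ Sum.inl) (u₂ ∘ Sum.inr) := by funext s; cases s <;> rfl
    set w₁ := u₁ ∘ Sum.inr with hw₁
    set w₂ := u₂ ∘ Sum.inr with hw₂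
    set f₁ : MvPolynomial σ₁ k := aeval (Sum.elim X (fun s => (C (w₁ s)))) P with hf₁
    set g₂ : MvPolynomial σ₁ k := aeval (Sum.elim X (fun s => (C (w₂ s)))) Q with hg₂
    have hf₁ne : f₁ ≠ 0 := by
      intro h
      apply hu₁
      have := key2 w₁ P (u₁ ∘ Sum.inl)
      rw [← hf₁, h] at this
      simp only [map_zero] at this
      rw [hu₁e, ← this]
    have hg₂ne : g₂ ≠ 0 := by
      intro h
      apply hu₂
      have := key2 w₂ Q (u₂ ∘ Sum.inl)
      rw [← hg₂, h] at this
      simp only [map_zero] at this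
      rw [hu₂e, ← this]
    have hprod : f₁ * g₂ ≠ 0 := mul_ne_zero hf₁ne hg₂ne
    have : ∃ a : σ₁ → k, eval a (f₁ * g₂) ≠ 0 := by
      by_contra h
      push_neg at h
      exact hprod (MvPolynomial.funext (fun a => by rw [h a, map_zero]))
    obtain ⟨a, ha⟩ := this
    rw [map_mul] at ha
    have haf : eval a f₁ ≠ 0 := fun h => ha (by rw [h, zero_mul])
    have hag : eval a g₂ ≠ 0 := fun h => ha (by rw [h, mul_zero])
    -- substitute a in the σ₁ variables
    set ψ : MvPolynomial (σ₁ ⊕ σ₂) k →ₐ[k] MvPolynomial σ₂ k :=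
      aeval (Sum.elim (fun s => (C (a s) : MvPolynomial σ₂ k)) X) with hψ
    have hψPQ : ψ P * ψ Q ∈ vanishingIdeal k S := by
      rw [← map_mul, my_mem_vI]
      intro w hw
      rw [hψ, key a (P * Q) w]
      exact hPQ _ hw
    rcases hS.mem_or_mem hψPQ with h | h
    · rw [my_mem_vI] at h
      have := h w₁ hu₁D
      rw [hψ, key a P w₁] at this
      have heq : eval (Sum.elim a w₁) P = eval a f₁ := (key2 w₁ P a).symm
      rw [heq] at this
      exact haf this
    · rw [my_mem_vI] at h
      have := h w₂ hu₂D
      rw [hψ, key a Q w₂] at this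
      have heq : eval (Sum.elim a w₂) Q = eval a g₂ := (key2 w₂ Q a).symm
      rw [heq] at this
      exact hag this

end Part1

section Part2
open Matrix Polynomial
variable {k : Type*} [Field k] {n : ℕ}

-- adjugate of a block triangular matrix is block triangular
lemma my_adjugate_blockTriangular {c : Fin n → ℕ} {A : Matrix (Fin n) (Fin n) k}
    (hA : A.BlockTriangular c) : (adjugate A).BlockTriangular c := by
  classical
  set B : Matrix (Fin n) (Fin n) (Polynomial k) :=
    A.map Polynomial.C + (Polynomial.X : Polynomial k) • 1 with hB
  have hBtri : B.BlockTriangular c := by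
    intro i j hij
    have hne : i ≠ j := by rintro rfl; exact lt_irrefl _ hij
    simp [hB, Matrix.map_apply, hA hij, Matrix.one_apply_ne hne]
  have hBdet : B.det ≠ 0 := by
    have : B = Matrix.charmatrix (-A) := by
      funext i j
      by_cases h : i = j
      · subst h
        simp [hB, Matrix.charmatrix_apply_eq, Matrix.one_apply_eq, sub_neg_eq_add, add_comm]
      · simp [hB, Matrix.charmatrix_apply_ne _ _ _ h, Matrix.one_apply_ne h,
          Matrix.map_apply]
    rw [this]
    exact (Matrix.charpoly_monic (-A)).ne_zero
  set K := FractionRing (Polynomial k)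
  set φ : Polynomial k →+* K := algebraMap (Polynomial k) K with hφ
  have hφinj : Function.Injective φ := IsFractionRing.injective (Polynomial k) K
  set B' : Matrix (Fin n) (Fin n) K := B.map φ with hB'
  have hB'tri : B'.BlockTriangular c := fun i j hij => by
    simp [hB', Matrix.map_apply, hBtri hij]
  have hB'det : B'.det ≠ 0 := by
    have h1 : φ B.det = (B.map ⇑φ).det := by rw [RingHom.map_det, RingHom.mapMatrix_apply]
    rw [hB', ← h1]
    intro h
    exact hBdet (hφinj (by rwa [map_zero]))
  haveI : Invertible B' := B'.invertibleOfIsUnitDet (isUnit_iff_ne_zero.2 hB'det)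
  have hinv : (B'⁻¹).BlockTriangular c := Matrix.blockTriangular_inv_of_blockTriangular hB'tri
  have hadjB' : (adjugate B').BlockTriangular c := by
    have : adjugate B' = B'.det • B'⁻¹ := by
      rw [Matrix.inv_def, smul_smul, Ring.inverse_eq_inv', mul_inv_cancel₀ hB'det, one_smul]
    rw [this]
    intro i j hij
    simp [Matrix.smul_apply, hinv hij]
  have hadjmap : (adjugate B).map φ = adjugate B' := by
    have := RingHom.map_adjugate φ B
    simpa [RingHom.mapMatrix_apply] using this
  have hadjB : (adjugate B).BlockTriangular c := by
    intro i j hij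
    have : φ ((adjugate B) i j) = 0 := by
      have := hadjB' hij
      rw [← hadjmap] at this
      simpa [Matrix.map_apply] using this
    exact hφinj (by rwa [map_zero])
  -- evaluate at 0
  have hev : B.map (Polynomial.evalRingHom (0 : k)) = A := by
    funext i j
    by_cases h : i = j
    · subst h; simp [hB, Matrix.map_apply, Matrix.one_apply_eq]
    · simp [hB, Matrix.map_apply, Matrix.one_apply_ne h]
  have : (adjugate B).map (Polynomial.evalRingHom (0 : k)) = adjugate A := by
    have := RingHom.map_adjugate (Polynomial.evalRingHom (0 : k)) B
    rw [RingHom.mapMatrix_apply, RingHom.mapMatrix_apply, hev] at this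
    exact this
  rw [← this]
  intro i j hij
  simp [Matrix.map_apply, hadjB hij]

end Part2

section Part3
open Matrix
variable {k : Type*} [Field k] {n : ℕ}

/-- The submodule of vectors supported on coordinates with `c`-value at most `t`. -/
def Wsub (c : Fin n → ℕ) (t : ℕ) : Submodule k (Fin n → k) where
  carrier := {x | ∀ l, t < c l → x l = 0}
  add_mem' := by intro x y hx hy l hl; simp only [Pi.add_apply, hx l hl, hy l hl, add_zero]
  zero_mem' := fun l _ => rfl
  smul_mem' := by intro a x hx l hl; simp only [Pi.smul_apply, hx l hl, smul_zero]

lemma mem_Wsub {c : Fin n → ℕ} {t : ℕ} {x : Fin n → k} :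
    x ∈ Wsub c t ↔ ∀ l, t < c l → x l = 0 := Iff.rfl

lemma Wsub_mono (c : Fin n → ℕ) {s t : ℕ} (h : s ≤ t) : Wsub (k := k) c s ≤ Wsub c t :=
  fun _ hx l hl => hx l (lt_of_le_of_lt h hl)

lemma single_mem_Wsub {c : Fin n → ℕ} {i : Fin n} {t : ℕ} (h : c i ≤ t) :
    Pi.single i (1 : k) ∈ Wsub c t := by
  intro l hl
  have hne : l ≠ i := by rintro rfl; omega
  simp [Pi.single_apply, hne]

lemma mulVec_mem_Wsub {c : Fin n → ℕ} {U : Matrix (Fin n) (Fin n) k}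
    (hU : U.BlockTriangular c) {t : ℕ} {x : Fin n → k} (hx : x ∈ Wsub c t) :
    U.mulVec x ∈ Wsub c t := by
  intro l hl
  show (U.mulVec x) l = 0
  simp only [Matrix.mulVec, dotProduct]
  apply Finset.sum_eq_zero
  intro i _
  by_cases h : t < c i
  · rw [hx i h, mul_zero]
  · exact mul_eq_zero_of_left (hU (lt_of_le_of_lt (not_lt.1 h) hl)) _

lemma exists_common_eigenvector [IsAlgClosed k] {V : Type*} [AddCommGroup V] [Module k V]
    [FiniteDimensional k V] [Nontrivial V] (f g : Module.End k V) (hfg : f * g = g * f) :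
    ∃ (v : V) (μ ν : k), v ≠ 0 ∧ f v = μ • v ∧ g v = ν • v := by
  obtain ⟨μ, hμ⟩ := Module.End.exists_eigenvalue f
  have hE : f.eigenspace μ ≠ ⊥ := hμ
  haveI : Nontrivial (f.eigenspace μ) := Submodule.nontrivial_iff_ne_bot.2 hE
  have hgE : ∀ x ∈ f.eigenspace μ, g x ∈ f.eigenspace μ := by
    intro x hx
    rw [Module.End.mem_eigenspace_iff] at hx ⊢
    have hcomm : f (g x) = g (f x) := by
      have h1 := LinearMap.congr_fun hfg x
      simpa [Module.End.mul_apply] using h1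
    rw [hcomm, hx]
    exact g.map_smul μ x
  obtain ⟨ν, hν⟩ := Module.End.exists_eigenvalue (g.restrict hgE)
  obtain ⟨y, hy⟩ := hν.exists_hasEigenvector
  refine ⟨(y : V), μ, ν, ?_, ?_, ?_⟩
  · simpa using hy.2
  · have := y.2
    rw [Module.End.mem_eigenspace_iff] at this
    simpa using this
  · have h1 := hy.1
    rw [Module.End.mem_eigenspace_iff] at h1
    have h2 := congrArg (Subtype.val) h1
    simpa [LinearMap.restrict_apply] using h2

lemma exists_tri_chain [IsAlgClosed k] {c : Fin n → ℕ} (hc : Monotone c)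
    {U V : Matrix (Fin n) (Fin n) k} (hU : U.BlockTriangular c) (hV : V.BlockTriangular c)
    (hUV : U * V = V * U) :
    ∀ j : ℕ, ∀ (hj : j ≤ n), ∃ v : Fin j → (Fin n → k),
      LinearIndependent k v ∧
      (∀ i : Fin j, v i ∈ Wsub c (c (Fin.castLE hj i))) ∧
      (∀ i : Fin j, U.mulVec (v i) ∈ Submodule.span k (v '' {l | l ≤ i})) ∧
      (∀ i : Fin j, V.mulVec (v i) ∈ Submodule.span k (v '' {l | l ≤ i})) := by
  intro j
  induction j with
  | zero =>
    intro hj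
    exact ⟨Fin.elim0, linearIndependent_empty_type, fun i => i.elim0, fun i => i.elim0,
      fun i => i.elim0⟩
  | succ j ih =>
    intro hj
    have hjn : j < n := Nat.lt_of_succ_le hj
    obtain ⟨v, hli, hW, hUv, hVv⟩ := ih (le_of_lt hjn)
    set jn : Fin n := ⟨j, hjn⟩ with hjn'
    set A : Submodule k (Fin n → k) := Wsub c (c jn) with hA
    have hvA : ∀ i : Fin j, v i ∈ A := by
      intro i
      refine Wsub_mono c (hc ?_) (hW i)
      show (Fin.castLE (le_of_lt hjn) i) ≤ jn
      exact Fin.le_def.2 (le_of_lt i.2)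
    set F : Submodule k (Fin n → k) := Submodule.span k (Set.range v) with hF
    have hFA : F ≤ A := Submodule.span_le.2 (by rintro _ ⟨i, rfl⟩; exact hvA i)
    have hUF : ∀ x ∈ F, U.mulVec x ∈ F := by
      intro x hx
      have hle : F.map (Matrix.mulVecLin U) ≤ F := by
        rw [hF, Submodule.map_span]
        apply Submodule.span_le.2
        rintro _ ⟨_, ⟨i, rfl⟩, rfl⟩
        show U.mulVec (v i) ∈ F
        exact Submodule.span_mono (Set.image_subset_range _ _) (hUv i)
      exact hle (Submodule.mem_map_of_mem hx)
    have hVF : ∀ x ∈ F, V.mulVec x ∈ F := by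
      intro x hx
      have hle : F.map (Matrix.mulVecLin V) ≤ F := by
        rw [hF, Submodule.map_span]
        apply Submodule.span_le.2
        rintro _ ⟨_, ⟨i, rfl⟩, rfl⟩
        show V.mulVec (v i) ∈ F
        exact Submodule.span_mono (Set.image_subset_range _ _) (hVv i)
      exact hle (Submodule.mem_map_of_mem hx)
    have hUA : ∀ x ∈ A, (Matrix.mulVecLin U) x ∈ A := fun x hx => mulVec_mem_Wsub hU hx
    have hVA : ∀ x ∈ A, (Matrix.mulVecLin V) x ∈ A := fun x hx => mulVec_mem_Wsub hV hx
    set FA : Submodule k A := F.comap A.subtype with hFAdef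
    set UA : Module.End k A := (Matrix.mulVecLin U).restrict hUA with hUAdef
    set VA : Module.End k A := (Matrix.mulVecLin V).restrict hVA with hVAdef
    have hUAVA : UA * VA = VA * UA := by
      apply LinearMap.ext
      intro x
      apply Subtype.ext
      have hx : U.mulVec (V.mulVec (x : Fin n → k)) = V.mulVec (U.mulVec (x : Fin n → k)) := by
        rw [Matrix.mulVec_mulVec, Matrix.mulVec_mulVec, hUV]
      simpa [hUAdef, hVAdef, Module.End.mul_apply, LinearMap.restrict_apply,
        Matrix.mulVecLin_apply] using hx
    have hUFA : FA ≤ FA.comap UA := by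
      intro x hx
      show UA x ∈ FA
      show ((UA x : A) : Fin n → k) ∈ F
      have : ((UA x : A) : Fin n → k) = U.mulVec (x : Fin n → k) := by
        simp [hUAdef, LinearMap.restrict_apply, Matrix.mulVecLin_apply]
      rw [this]
      exact hUF _ hx
    have hVFA : FA ≤ FA.comap VA := by
      intro x hx
      show VA x ∈ FA
      show ((VA x : A) : Fin n → k) ∈ F
      have : ((VA x : A) : Fin n → k) = V.mulVec (x : Fin n → k) := by
        simp [hVAdef, LinearMap.restrict_apply, Matrix.mulVecLin_apply]
      rw [this]
      exact hVF _ hx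
    have hdimF : Module.finrank k F = j := by
      rw [hF, finrank_span_eq_card hli, Fintype.card_fin]
    have hdimFA : Module.finrank k FA = j := by
      rw [← hdimF]
      exact (Submodule.comapSubtypeEquivOfLe hFA).finrank_eq
    have hdimA : j + 1 ≤ Module.finrank k A := by
      have hmem : ∀ l : Fin (j + 1), Pi.single (Fin.castLE hj l) (1 : k) ∈ A := by
        intro l
        apply single_mem_Wsub
        apply hc
        show (Fin.castLE hj l) ≤ jn
        simpa [Fin.le_def] using Nat.lt_succ_iff.1 l.2
      set w : Fin (j + 1) → A := fun l => ⟨Pi.single (Fin.castLE hj l) (1 : k), hmem l⟩ with hw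
      have h1 : LinearIndependent k (fun l : Fin (j + 1) =>
          (Pi.single (Fin.castLE hj l) (1 : k) : Fin n → k)) := by
        have h2 := (Pi.basisFun k (Fin n)).linearIndependent.comp (Fin.castLE hj)
          (Fin.castLE_injective hj)
        convert h2 using 1
        funext l
        simp [Function.comp, Pi.basisFun_apply]
      have hwli : LinearIndependent k w := h1.of_comp A.subtype
      have := hwli.fintype_card_le_finrank
      simpa using this
    have hFAtop : FA < ⊤ := by
      rw [lt_top_iff_ne_top]
      intro h
      rw [h, finrank_top] at hdimFA
      omega
    haveI : Nontrivial (A ⧸ FA) := Submodule.Quotient.nontrivial_iff.2 hFAtop.ne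
    set Ub : Module.End k (A ⧸ FA) := Submodule.mapQ FA FA UA hUFA with hUbdef
    set Vb : Module.End k (A ⧸ FA) := Submodule.mapQ FA FA VA hVFA with hVbdef
    have hUbVb : Ub * Vb = Vb * Ub := by
      apply LinearMap.ext
      intro x
      obtain ⟨y, rfl⟩ := Submodule.Quotient.mk_surjective FA x
      have h1 := LinearMap.congr_fun hUAVA y
      simp only [Module.End.mul_apply] at h1 ⊢
      rw [hUbdef, hVbdef]
      simp only [Submodule.mapQ_apply]
      rw [h1]
    obtain ⟨z, μ, ν, hz0, hzU, hzV⟩ := exists_common_eigenvector Ub Vb hUbVb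
    obtain ⟨x₀, hx₀⟩ := Submodule.Quotient.mk_surjective FA z
    set vn : Fin n → k := (x₀ : Fin n → k) with hvn
    have hvnA : vn ∈ A := x₀.2
    have hvnF : vn ∉ F := by
      intro h
      apply hz0
      rw [← hx₀, Submodule.Quotient.mk_eq_zero]
      exact h
    -- membership facts for U
    have hUvn : U.mulVec vn ∈ F ⊔ Submodule.span k {vn} := by
      have h1 : FA.mkQ (UA x₀ - μ • x₀) = 0 := by
        rw [map_sub, _root_.map_smul]
        have h2 : FA.mkQ (UA x₀) = Ub z := by
          rw [← hx₀, hUbdef]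
          simp only [Submodule.mkQ_apply, Submodule.mapQ_apply]
        rw [h2, hzU, Submodule.mkQ_apply, hx₀, sub_self]
      have h3 : UA x₀ - μ • x₀ ∈ FA := by
        rw [Submodule.mkQ_apply, Submodule.Quotient.mk_eq_zero] at h1
        exact h1
      have h4 : U.mulVec vn - μ • vn ∈ F := by
        have h5 : ((UA x₀ - μ • x₀ : A) : Fin n → k) = U.mulVec vn - μ • vn := by
          simp [hUAdef, LinearMap.restrict_apply, Matrix.mulVecLin_apply, hvn]
        rw [← h5]
        exact h3
      have h6 : U.mulVec vn = (U.mulVec vn - μ • vn) + μ • vn := by abel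
      rw [h6]
      exact Submodule.add_mem _ (Submodule.mem_sup_left h4)
        (Submodule.mem_sup_right (Submodule.smul_mem _ _ (Submodule.mem_span_singleton_self _)))
    have hVvn : V.mulVec vn ∈ F ⊔ Submodule.span k {vn} := by
      have h1 : FA.mkQ (VA x₀ - ν • x₀) = 0 := by
        rw [map_sub, _root_.map_smul]
        have h2 : FA.mkQ (VA x₀) = Vb z := by
          rw [← hx₀, hVbdef]
          simp only [Submodule.mkQ_apply, Submodule.mapQ_apply]
        rw [h2, hzV, Submodule.mkQ_apply, hx₀, sub_self]
      have h3 : VA x₀ - ν • x₀ ∈ FA := by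
        rw [Submodule.mkQ_apply, Submodule.Quotient.mk_eq_zero] at h1
        exact h1
      have h4 : V.mulVec vn - ν • vn ∈ F := by
        have h5 : ((VA x₀ - ν • x₀ : A) : Fin n → k) = V.mulVec vn - ν • vn := by
          simp [hVAdef, LinearMap.restrict_apply, Matrix.mulVecLin_apply, hvn]
        rw [← h5]
        exact h3
      have h6 : V.mulVec vn = (V.mulVec vn - ν • vn) + ν • vn := by abel
      rw [h6]
      exact Submodule.add_mem _ (Submodule.mem_sup_left h4)
        (Submodule.mem_sup_right (Submodule.smul_mem _ _ (Submodule.mem_span_singleton_self _)))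
    -- assemble
    refine ⟨Fin.snoc v vn, ?_, ?_, ?_, ?_⟩
    · rw [linearIndependent_fin_snoc]
      exact ⟨hli, hvnF⟩
    · intro i
      refine Fin.lastCases ?_ ?_ i
      · rw [Fin.snoc_last]
        have : Fin.castLE hj (Fin.last j) = jn := by
          apply Fin.ext
          simp [hjn']
        rw [this]
        exact hvnA
      · intro i'
        rw [Fin.snoc_castSucc]
        have : Fin.castLE hj (Fin.castSucc i') = Fin.castLE (le_of_lt hjn) i' := by
          apply Fin.ext
          simp
        rw [this]
        exact hW i'
    · intro i
      refine Fin.lastCases ?_ ?_ i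
      · rw [Fin.snoc_last]
        refine SetLike.le_def.1 ?_ hUvn
        apply sup_le
        · rw [hF]
          apply Submodule.span_mono
          rintro _ ⟨i', rfl⟩
          exact ⟨Fin.castSucc i', Fin.le_last _, by rw [Fin.snoc_castSucc]⟩
        · apply Submodule.span_mono
          rintro _ rfl
          exact ⟨Fin.last j, by simp, by rw [Fin.snoc_last]⟩
      · intro i'
        rw [Fin.snoc_castSucc]
        refine SetLike.le_def.1 ?_ (hUv i')
        apply Submodule.span_mono
        rintro _ ⟨l, hl, rfl⟩
        exact ⟨Fin.castSucc l, Fin.castSucc_le_castSucc_iff.2 hl, by rw [Fin.snoc_castSucc]⟩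
    · intro i
      refine Fin.lastCases ?_ ?_ i
      · rw [Fin.snoc_last]
        refine SetLike.le_def.1 ?_ hVvn
        apply sup_le
        · rw [hF]
          apply Submodule.span_mono
          rintro _ ⟨i', rfl⟩
          exact ⟨Fin.castSucc i', Fin.le_last _, by rw [Fin.snoc_castSucc]⟩
        · apply Submodule.span_mono
          rintro _ rfl
          exact ⟨Fin.last j, by simp, by rw [Fin.snoc_last]⟩
      · intro i'
        rw [Fin.snoc_castSucc]
        refine SetLike.le_def.1 ?_ (hVv i')
        apply Submodule.span_mono
        rintro _ ⟨l, hl, rfl⟩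
        exact ⟨Fin.castSucc l, Fin.castSucc_le_castSucc_iff.2 hl, by rw [Fin.snoc_castSucc]⟩

end Part3

section Part4
open Matrix
variable {k : Type*} [Field k] {n : ℕ}

lemma exists_triangularization [IsAlgClosed k] {b c : Fin n → ℕ} (hb : Monotone b)
    (hc : Monotone c) {U V : Matrix (Fin n) (Fin n) k}
    (hU : U.BlockTriangular c) (hV : V.BlockTriangular c) (hUV : U * V = V * U) :
    ∃ G T S : Matrix (Fin n) (Fin n) k, IsUnit G.det ∧ G.BlockTriangular c ∧
      T.BlockTriangular b ∧ S.BlockTriangular b ∧ G * T = U * G ∧ G * S = V * G := by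
  rcases Nat.eq_zero_or_pos n with hn | hn
  · subst hn
    refine ⟨1, 1, 1, by simp, Matrix.blockTriangular_one, Matrix.blockTriangular_one,
      Matrix.blockTriangular_one, ?_, ?_⟩ <;>
      · funext i j; exact i.elim0
  haveI : Nonempty (Fin n) := ⟨⟨0, hn⟩⟩
  obtain ⟨v, hli, hW, hUv, hVv⟩ := exists_tri_chain hc hU hV hUV n (le_refl n)
  have hcast : ∀ i : Fin n, Fin.castLE (le_refl n) i = i := fun i => Fin.ext rfl
  have hcard : Fintype.card (Fin n) = Module.finrank k (Fin n → k) := by simp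
  set β : Module.Basis (Fin n) k (Fin n → k) := basisOfLinearIndependentOfCardEqFinrank hli hcard
    with hβdef
  have hβ : ⇑β = v := coe_basisOfLinearIndependentOfCardEqFinrank hli hcard
  set G : Matrix (Fin n) (Fin n) k := Matrix.of (fun i j => v j i) with hG
  set T : Matrix (Fin n) (Fin n) k := Matrix.of (fun l j => β.repr (U.mulVec (v j)) l) with hT
  set S : Matrix (Fin n) (Fin n) k := Matrix.of (fun l j => β.repr (V.mulVec (v j)) l) with hS
  have hGdet : IsUnit G.det := by
    have h1 : (Pi.basisFun k (Fin n)).toMatrix ⇑β = G := by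
      funext i j
      simp [Module.Basis.toMatrix_apply, Pi.basisFun_repr, hβ, hG]
    have h2 := Module.Basis.toMatrix_mul_toMatrix_flip (Pi.basisFun k (Fin n)) β
    rw [h1] at h2
    exact Matrix.isUnit_det_of_right_inverse h2
  have hGtri : G.BlockTriangular c := by
    intro i j hij
    have h0 := hW j
    rw [hcast] at h0
    exact h0 i hij
  have hTtri : T.BlockTriangular b := by
    intro l j hlj
    have hjl : ¬ l ≤ j := by
      intro h
      exact absurd (hb h) (not_le.2 hlj)
    have h1 : U.mulVec (v j) ∈ Submodule.span k (⇑β '' {i | i ≤ j}) := by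
      rw [hβ]; exact hUv j
    rw [Module.Basis.mem_span_image] at h1
    show β.repr (U.mulVec (v j)) l = 0
    rw [← Finsupp.notMem_support_iff]
    intro hmem
    exact hjl (h1 hmem)
  have hStri : S.BlockTriangular b := by
    intro l j hlj
    have hjl : ¬ l ≤ j := by
      intro h
      exact absurd (hb h) (not_le.2 hlj)
    have h1 : V.mulVec (v j) ∈ Submodule.span k (⇑β '' {i | i ≤ j}) := by
      rw [hβ]; exact hVv j
    rw [Module.Basis.mem_span_image] at h1
    show β.repr (V.mulVec (v j)) l = 0
    rw [← Finsupp.notMem_support_iff]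
    intro hmem
    exact hjl (h1 hmem)
  have key : ∀ (W : Matrix (Fin n) (Fin n) k),
      G * (Matrix.of (fun l j => β.repr (W.mulVec (v j)) l)) = W * G := by
    intro W
    funext i j
    rw [Matrix.mul_apply, Matrix.mul_apply]
    have hs := β.sum_repr (W.mulVec (v j))
    rw [hβ] at hs
    have hs' : (∑ l, β.repr (W.mulVec (v j)) l • v l) i = (W.mulVec (v j)) i := by
      rw [hs]
    rw [Finset.sum_apply] at hs'
    calc ∑ l, G i l * Matrix.of (fun l j => β.repr (W.mulVec (v j)) l) l j
        = ∑ l, β.repr (W.mulVec (v j)) l • v l i := by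
          apply Finset.sum_congr rfl
          intro l _
          simp [hG, smul_eq_mul, mul_comm]
      _ = (W.mulVec (v j)) i := by
          rw [← hs']
          apply Finset.sum_congr rfl
          intro l _
          simp
      _ = ∑ l, W i l * G l j := by
          simp [Matrix.mulVec, dotProduct, hG]
  exact ⟨G, T, S, hGdet, hGtri, hTtri, hStri, key U, key V⟩

end Part4

section TriMat
open Matrix

variable {k : Type*} [Field k] {n : ℕ}

/-- The generic block upper triangular matrix with entries given by `w`. -/
def triMat {R : Type*} [CommRing R] (d : Fin n → ℕ) (w : PIdx n d → R) :
    Matrix (Fin n) (Fin n) R :=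
  Matrix.of fun i j => if h : d i ≤ d j then w ⟨(i, j), h⟩ else 0

lemma triMat_blockTriangular {R : Type*} [CommRing R] (d : Fin n → ℕ) (w : PIdx n d → R) :
    (triMat d w).BlockTriangular d := fun _ _ hij => dif_neg (not_le.2 hij)

lemma triMat_eq_of_blockTriangular {R : Type*} [CommRing R] {d : Fin n → ℕ}
    {M : Matrix (Fin n) (Fin n) R} (hM : M.BlockTriangular d) :
    triMat d (fun s => M s.1.1 s.1.2) = M := by
  funext i j
  show (if h : d i ≤ d j then M i j else 0) = M i j
  split
  · rfl
  · next h => exact (hM (not_le.1 h)).symm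

lemma triMat_apply_pair {R : Type*} [CommRing R] (d : Fin n → ℕ) (w : PIdx n d → R)
    (s : PIdx n d) : triMat d w s.1.1 s.1.2 = w s := by
  obtain ⟨⟨i, j⟩, h⟩ := s
  simp [triMat, dif_pos h]

lemma triMat_map {R S : Type*} [CommRing R] [CommRing S] (f : R →+* S)
    (d : Fin n → ℕ) (w : PIdx n d → R) :
    (triMat d w).map f = triMat d (fun s => f (w s)) := by
  funext i j
  by_cases h : d i ≤ d j <;> simp [triMat, Matrix.map_apply, h]

lemma pMatX_eq_triMat {b : Fin n → ℕ} (x : PIdx n b ⊕ PIdx n b → k) :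
    pMatX k x = triMat b (fun s => x (Sum.inl s)) := rfl

lemma pMatY_eq_triMat {b : Fin n → ℕ} (x : PIdx n b ⊕ PIdx n b → k) :
    pMatY k x = triMat b (fun s => x (Sum.inr s)) := rfl

end TriMat


/-- Let `p ⊆ q` be standard parabolic subalgebras of `gl_n(k)` (determined by monotone
block-index functions `b` and `c`, the blocks for `b` refining those for `c`), over an
algebraically closed field `k`.  If the commuting variety `C(p)` is irreducible
(equivalently, its vanishing ideal in the coordinate ring of `p × p` is prime), then the
commuting variety `C(q)` is irreducible. -/
theorem commVariety_parabolic_irreducible_of_sub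
    (k : Type*) [Field k] [IsAlgClosed k] (n : ℕ)
    (b c : Fin n → ℕ) (hb : Monotone b) (hc : Monotone c)
    (hpq : {M : Matrix (Fin n) (Fin n) k | M.BlockTriangular b} ⊆
      {M : Matrix (Fin n) (Fin n) k | M.BlockTriangular c})
    (hp : (vanishingIdeal k (Cp k n b)).IsPrime) :
    (vanishingIdeal k (Cp k n c)).IsPrime := by
  classical
  set τ1 := PIdx n c with hτ1
  set τ2 := (PIdx n b ⊕ PIdx n b) with hτ2
  set Gm : Matrix (Fin n) (Fin n) (MvPolynomial (τ1 ⊕ τ2) k) :=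
    triMat c (fun s => X (Sum.inl s)) with hGm
  set Xm : Matrix (Fin n) (Fin n) (MvPolynomial (τ1 ⊕ τ2) k) :=
    triMat b (fun s => X (Sum.inr (Sum.inl s))) with hXm
  set Ym : Matrix (Fin n) (Fin n) (MvPolynomial (τ1 ⊕ τ2) k) :=
    triMat b (fun s => X (Sum.inr (Sum.inr s))) with hYm
  set g : (PIdx n c ⊕ PIdx n c) → MvPolynomial (τ1 ⊕ τ2) k :=
    Sum.elim (fun s => (Gm * Xm * Gm.adjugate) s.1.1 s.1.2)
      (fun s => (Gm * Ym * Gm.adjugate) s.1.1 s.1.2) with hg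
  set D : Set ((τ1 ⊕ τ2) → k) := {u | (u ∘ Sum.inr) ∈ Cp k n b} with hD
  have hDprime : (vanishingIdeal k D).IsPrime := my_cylinder_prime hp
  -- the image of D is exactly C(q)
  have himg : (fun u s => eval u (g s)) '' D = Cp k n c := by
    apply Set.Subset.antisymm
    · -- image is contained in C(q)
      rintro _ ⟨u, huD, rfl⟩
      set G : Matrix (Fin n) (Fin n) k := triMat c (fun s => u (Sum.inl s)) with hGk
      set Xk : Matrix (Fin n) (Fin n) k := triMat b (fun s => u (Sum.inr (Sum.inl s))) with hXk
      set Yk : Matrix (Fin n) (Fin n) k := triMat b (fun s => u (Sum.inr (Sum.inr s))) with hYk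
      have hGmap : Gm.map (eval u) = G := by
        rw [hGm, triMat_map (eval u : MvPolynomial (τ1 ⊕ τ2) k →+* k)]
        simp only [eval_X]; rfl
      have hXmap : Xm.map (eval u) = Xk := by
        rw [hXm, triMat_map (eval u : MvPolynomial (τ1 ⊕ τ2) k →+* k)]
        simp only [eval_X]; rfl
      have hYmap : Ym.map (eval u) = Yk := by
        rw [hYm, triMat_map (eval u : MvPolynomial (τ1 ⊕ τ2) k →+* k)]
        simp only [eval_X]; rfl
      have hAdjmap : Gm.adjugate.map (eval u) = G.adjugate := by
        have := RingHom.map_adjugate (eval u : MvPolynomial (τ1 ⊕ τ2) k →+* k) Gm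
        simp only [RingHom.mapMatrix_apply] at this
        rw [this, hGmap]
      have hmap1 : (Gm * Xm * Gm.adjugate).map (eval u) = G * Xk * G.adjugate := by
        rw [Matrix.map_mul, Matrix.map_mul, hGmap, hXmap, hAdjmap]
      have hmap2 : (Gm * Ym * Gm.adjugate).map (eval u) = G * Yk * G.adjugate := by
        rw [Matrix.map_mul, Matrix.map_mul, hGmap, hYmap, hAdjmap]
      -- block triangularity
      have hGtri : G.BlockTriangular c := triMat_blockTriangular _ _
      have hXtri : Xk.BlockTriangular c := hpq (triMat_blockTriangular _ _)
      have hYtri : Yk.BlockTriangular c := hpq (triMat_blockTriangular _ _)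
      have hAdjtri : G.adjugate.BlockTriangular c := my_adjugate_blockTriangular hGtri
      have hM1tri : (G * Xk * G.adjugate).BlockTriangular c := (hGtri.mul hXtri).mul hAdjtri
      have hM2tri : (G * Yk * G.adjugate).BlockTriangular c := (hGtri.mul hYtri).mul hAdjtri
      -- identification of the matrices
      have hfX : pMatX k (fun s => eval u (g s)) = G * Xk * G.adjugate := by
        rw [pMatX_eq_triMat]
        have e1 : (fun s : PIdx n c => eval u (g (Sum.inl s)))
            = fun s : PIdx n c => (G * Xk * G.adjugate) s.1.1 s.1.2 := by
          funext s
          show eval u ((Gm * Xm * Gm.adjugate) s.1.1 s.1.2) = _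
          rw [← hmap1]
          rfl
        rw [show (fun s : PIdx n c => (fun s => eval u (g s)) (Sum.inl s))
            = fun s : PIdx n c => eval u (g (Sum.inl s)) from rfl, e1,
          triMat_eq_of_blockTriangular hM1tri]
      have hfY : pMatY k (fun s => eval u (g s)) = G * Yk * G.adjugate := by
        rw [pMatY_eq_triMat]
        have e1 : (fun s : PIdx n c => eval u (g (Sum.inr s)))
            = fun s : PIdx n c => (G * Yk * G.adjugate) s.1.1 s.1.2 := by
          funext s
          show eval u ((Gm * Ym * Gm.adjugate) s.1.1 s.1.2) = _
          rw [← hmap2]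
          rfl
        rw [show (fun s : PIdx n c => (fun s => eval u (g s)) (Sum.inr s))
            = fun s : PIdx n c => eval u (g (Sum.inr s)) from rfl, e1,
          triMat_eq_of_blockTriangular hM2tri]
      -- commutation
      have hXY : Xk * Yk = Yk * Xk := by
        have h1 : (u ∘ Sum.inr) ∈ Cp k n b := huD
        have h2 : pMatX k (u ∘ Sum.inr) = Xk := rfl
        have h3 : pMatY k (u ∘ Sum.inr) = Yk := rfl
        rw [Cp, Set.mem_setOf_eq, h2, h3] at h1
        exact h1
      have adjconj : ∀ P Q : Matrix (Fin n) (Fin n) k,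
          (G * P * G.adjugate) * (G * Q * G.adjugate)
            = G.det • (G * (P * Q) * G.adjugate) := by
        intro P Q
        calc (G * P * G.adjugate) * (G * Q * G.adjugate)
            = G * (P * ((G.adjugate * G) * (Q * G.adjugate))) := by
              simp only [Matrix.mul_assoc]
          _ = G.det • (G * (P * Q) * G.adjugate) := by
              rw [Matrix.adjugate_mul, Matrix.smul_mul, Matrix.one_mul, Matrix.mul_smul,
                Matrix.mul_smul]
              simp only [Matrix.mul_assoc]
      show (fun s => eval u (g s)) ∈ Cp k n c
      rw [Cp, Set.mem_setOf_eq, hfX, hfY, adjconj, adjconj, hXY]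
    · -- C(q) is contained in the image
      intro w hw
      set U : Matrix (Fin n) (Fin n) k := triMat c (fun s => w (Sum.inl s)) with hUdef
      set V : Matrix (Fin n) (Fin n) k := triMat c (fun s => w (Sum.inr s)) with hVdef
      have hU : U.BlockTriangular c := triMat_blockTriangular _ _
      have hV : V.BlockTriangular c := triMat_blockTriangular _ _
      have hUV : U * V = V * U := by
        have h1 := hw
        rw [Cp, Set.mem_setOf_eq] at h1
        exact h1
      obtain ⟨G, T, S, hdet, hGtri, hTtri, hStri, hGT, hGS⟩ :=
        exists_triangularization hb hc hU hV hUV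
      have hdet0 : G.det ≠ 0 := hdet.ne_zero
      haveI : Invertible G := G.invertibleOfIsUnitDet hdet
      set Xk : Matrix (Fin n) (Fin n) k := (G.det)⁻¹ • T with hXkdef
      set Yk : Matrix (Fin n) (Fin n) k := (G.det)⁻¹ • S with hYkdef
      have hXtri : Xk.BlockTriangular b := by
        intro i j hij
        simp [hXkdef, Matrix.smul_apply, hTtri hij]
      have hYtri : Yk.BlockTriangular b := by
        intro i j hij
        simp [hYkdef, Matrix.smul_apply, hStri hij]
      have hTS : T * S = S * T := by
        have h1 : G * (T * S) = G * (S * T) := by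
          rw [← Matrix.mul_assoc, hGT, Matrix.mul_assoc, hGS, ← Matrix.mul_assoc, hUV,
            Matrix.mul_assoc, ← hGT, ← Matrix.mul_assoc, ← hGS]
          simp only [Matrix.mul_assoc]
        calc T * S = ⅟G * (G * (T * S)) := by
              rw [← Matrix.mul_assoc, invOf_mul_self, Matrix.one_mul]
          _ = ⅟G * (G * (S * T)) := by rw [h1]
          _ = S * T := by rw [← Matrix.mul_assoc, invOf_mul_self, Matrix.one_mul]
      set u : (τ1 ⊕ τ2) → k :=
        Sum.elim (fun s : PIdx n c => G s.1.1 s.1.2)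
          (Sum.elim (fun s : PIdx n b => Xk s.1.1 s.1.2)
            (fun s : PIdx n b => Yk s.1.1 s.1.2)) with hu
      have hpmX : pMatX k (u ∘ Sum.inr) = Xk := by
        rw [pMatX_eq_triMat]
        exact triMat_eq_of_blockTriangular hXtri
      have hpmY : pMatY k (u ∘ Sum.inr) = Yk := by
        rw [pMatY_eq_triMat]
        exact triMat_eq_of_blockTriangular hYtri
      have huD : u ∈ D := by
        rw [hD, Set.mem_setOf_eq, Cp, Set.mem_setOf_eq, hpmX, hpmY]
        rw [hXkdef, hYkdef, Matrix.smul_mul, Matrix.mul_smul, Matrix.smul_mul, Matrix.mul_smul,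
          hTS]
      refine ⟨u, huD, ?_⟩
      -- evaluation of the polynomial matrices at u
      have hGmap : Gm.map (eval u) = G := by
        rw [hGm, triMat_map (eval u : MvPolynomial (τ1 ⊕ τ2) k →+* k)]
        simp only [eval_X]
        exact triMat_eq_of_blockTriangular hGtri
      have hXmap : Xm.map (eval u) = Xk := by
        rw [hXm, triMat_map (eval u : MvPolynomial (τ1 ⊕ τ2) k →+* k)]
        simp only [eval_X]
        exact triMat_eq_of_blockTriangular hXtri
      have hYmap : Ym.map (eval u) = Yk := by
        rw [hYm, triMat_map (eval u : MvPolynomial (τ1 ⊕ τ2) k →+* k)]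
        simp only [eval_X]
        exact triMat_eq_of_blockTriangular hYtri
      have hAdjmap : Gm.adjugate.map (eval u) = G.adjugate := by
        have := RingHom.map_adjugate (eval u : MvPolynomial (τ1 ⊕ τ2) k →+* k) Gm
        simp only [RingHom.mapMatrix_apply] at this
        rw [this, hGmap]
      have hmap1 : (Gm * Xm * Gm.adjugate).map (eval u) = G * Xk * G.adjugate := by
        rw [Matrix.map_mul, Matrix.map_mul, hGmap, hXmap, hAdjmap]
      have hmap2 : (Gm * Ym * Gm.adjugate).map (eval u) = G * Yk * G.adjugate := by
        rw [Matrix.map_mul, Matrix.map_mul, hGmap, hYmap, hAdjmap]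
      have hconj : ∀ (P W : Matrix (Fin n) (Fin n) k), G * P = W * G →
          G * ((G.det)⁻¹ • P) * G.adjugate = W := by
        intro P W hPW
        calc G * ((G.det)⁻¹ • P) * G.adjugate = (G.det)⁻¹ • (G * P * G.adjugate) := by
              rw [Matrix.mul_smul, Matrix.smul_mul]
          _ = (G.det)⁻¹ • (W * (G * G.adjugate)) := by
              rw [hPW, Matrix.mul_assoc]
          _ = (G.det)⁻¹ • (G.det • W) := by
              rw [Matrix.mul_adjugate, Matrix.mul_smul, Matrix.mul_one]
          _ = W := by rw [smul_smul, inv_mul_cancel₀ hdet0, one_smul]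
      have hconjX : G * Xk * G.adjugate = U := hconj T U hGT
      have hconjY : G * Yk * G.adjugate = V := hconj S V hGS
      funext s
      cases s with
      | inl s =>
        show eval u ((Gm * Xm * Gm.adjugate) s.1.1 s.1.2) = w (Sum.inl s)
        have : eval u ((Gm * Xm * Gm.adjugate) s.1.1 s.1.2)
            = (G * Xk * G.adjugate) s.1.1 s.1.2 := by rw [← hmap1]; rfl
        rw [this, hconjX, hUdef, triMat_apply_pair]
      | inr s =>
        show eval u ((Gm * Ym * Gm.adjugate) s.1.1 s.1.2) = w (Sum.inr s)
        have : eval u ((Gm * Ym * Gm.adjugate) s.1.1 s.1.2)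
            = (G * Yk * G.adjugate) s.1.1 s.1.2 := by rw [← hmap2]; rfl
        rw [this, hconjY, hVdef, triMat_apply_pair]
  have hcomap : vanishingIdeal k (Cp k n c)
      = Ideal.comap (aeval g : MvPolynomial (PIdx n c ⊕ PIdx n c) k →ₐ[k]
          MvPolynomial (τ1 ⊕ τ2) k).toRingHom (vanishingIdeal k D) := by
    rw [← himg, my_vanishingIdeal_image]
  rw [hcomap]
  haveI := hDprime
  exact Ideal.IsPrime.comap _
end

section
/- Let k be a field and let X ∈ b_n be an upper triangular n×n matrix such that the centralizer {W ∈ b_n : WX = XW} has k-dimension exactly n (i.e., X is regular in b_n). Then for every Y ∈ b_n, the k-vector space {(W,Z) ∈ b_n × b_n : (XZ − ZX) + (WY − YW) = 0} has dimension n(n+1)/2 + n. (This is the tangent-space computation showing that points (X,Y) of the commuting scheme of b_n with X regular are smooth points.) -/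
/-- The centralizer in `b_n` (upper triangular `n × n` matrices) of a matrix `X`, as a
`k`-subspace of the space of matrices: `{W ∈ b_n : WX = XW}`. -/
def borelCentralizer {k : Type*} [Field k] {n : ℕ} (X : Matrix (Fin n) (Fin n) k) :
    Submodule k (Matrix (Fin n) (Fin n) k) where
  carrier := {W | (∀ i j : Fin n, j < i → W i j = 0) ∧ W * X = X * W}
  add_mem' := by
    rintro a b ⟨ha1, ha2⟩ ⟨hb1, hb2⟩
    refine ⟨fun i j h => ?_, ?_⟩
    · simp [Matrix.add_apply, ha1 i j h, hb1 i j h]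
    · rw [add_mul, mul_add, ha2, hb2]
  zero_mem' := ⟨fun i j _ => rfl, by rw [zero_mul, mul_zero]⟩
  smul_mem' := by
    rintro c a ⟨ha1, ha2⟩
    refine ⟨fun i j h => ?_, ?_⟩
    · simp [Matrix.smul_apply, ha1 i j h]
    · rw [Matrix.smul_mul, Matrix.mul_smul, ha2]

/-- The tangent space at `(X, Y)` of the commuting scheme of `b_n`, as a `k`-subspace of
`b_n × b_n`: pairs `(W, Z)` of upper triangular matrices with `[X,Z] + [W,Y] = 0`. -/
def commSchemeTangent {k : Type*} [Field k] {n : ℕ} (X Y : Matrix (Fin n) (Fin n) k) :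
    Submodule k (Matrix (Fin n) (Fin n) k × Matrix (Fin n) (Fin n) k) where
  carrier := {WZ | (∀ i j : Fin n, j < i → WZ.1 i j = 0) ∧
    (∀ i j : Fin n, j < i → WZ.2 i j = 0) ∧
    (X * WZ.2 - WZ.2 * X) + (WZ.1 * Y - Y * WZ.1) = 0}
  add_mem' := by
    rintro ⟨a1, a2⟩ ⟨b1, b2⟩ ⟨ha1, ha2, ha3⟩ ⟨hb1, hb2, hb3⟩
    refine ⟨fun i j h => ?_, fun i j h => ?_, ?_⟩
    · show (a1 + b1) i j = 0
      rw [Matrix.add_apply, show a1 i j = 0 from ha1 i j h,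
        show b1 i j = 0 from hb1 i j h, add_zero]
    · show (a2 + b2) i j = 0
      rw [Matrix.add_apply, show a2 i j = 0 from ha2 i j h,
        show b2 i j = 0 from hb2 i j h, add_zero]
    · have h : ((X * a2 - a2 * X) + (a1 * Y - Y * a1)) +
          ((X * b2 - b2 * X) + (b1 * Y - Y * b1)) = 0 := by
        rw [ha3, hb3, add_zero]
      rw [← h]
      simp only [Prod.fst_add, Prod.snd_add]
      noncomm_ring
  zero_mem' := by
    refine ⟨fun i j _ => rfl, fun i j _ => rfl, ?_⟩
    simp
  smul_mem' := by
    rintro c ⟨a1, a2⟩ ⟨ha1, ha2, ha3⟩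
    refine ⟨fun i j h => ?_, fun i j h => ?_, ?_⟩
    · show (c • a1) i j = 0
      rw [Matrix.smul_apply, show a1 i j = 0 from ha1 i j h, smul_zero]
    · show (c • a2) i j = 0
      rw [Matrix.smul_apply, show a2 i j = 0 from ha2 i j h, smul_zero]
    · have h : c • ((X * a2 - a2 * X) + (a1 * Y - Y * a1)) = 0 := by
        rw [ha3, smul_zero]
      rw [← h]
      simp only [Prod.smul_fst, Prod.smul_snd, smul_add, smul_sub,
        Matrix.mul_smul, Matrix.smul_mul]
open Matrix Module Finset

section AuxCommScheme

variable {k : Type*} [Field k] {n : ℕ}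

/-- Submodule of matrices vanishing on a prescribed set of entries. -/
def zeroOnAux (Q : Fin n → Fin n → Prop) [∀ i j, Decidable (Q i j)] :
    Submodule k (Matrix (Fin n) (Fin n) k) where
  carrier := {W | ∀ i j, Q i j → W i j = 0}
  add_mem' := by
    intro a b ha hb i j h
    simp [Matrix.add_apply, ha i j h, hb i j h]
  zero_mem' := fun i j _ => rfl
  smul_mem' := by
    intro c a ha i j h
    simp [Matrix.smul_apply, ha i j h]

lemma mem_zeroOnAux {Q : Fin n → Fin n → Prop} [∀ i j, Decidable (Q i j)]
    {W : Matrix (Fin n) (Fin n) k} :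
    W ∈ zeroOnAux (k := k) Q ↔ ∀ i j, Q i j → W i j = 0 := Iff.rfl

noncomputable def zeroOnAuxEquiv (Q : Fin n → Fin n → Prop) [∀ i j, Decidable (Q i j)] :
    zeroOnAux (k := k) Q ≃ₗ[k] ({p : Fin n × Fin n // ¬ Q p.1 p.2} → k) where
  toFun W p := W.1 p.1.1 p.1.2
  map_add' a b := rfl
  map_smul' c a := rfl
  invFun f := ⟨Matrix.of fun i j => if h : Q i j then 0 else f ⟨(i, j), h⟩,
    fun i j h => by simp [h]⟩
  left_inv W := by
    apply Subtype.ext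
    ext i j
    by_cases h : Q i j
    · simp [h, W.2 i j h]
    · simp [h]
  right_inv f := by
    ext p
    simp [p.2]

lemma finrank_zeroOnAux (Q : Fin n → Fin n → Prop) [∀ i j, Decidable (Q i j)] :
    finrank k (zeroOnAux (k := k) Q)
      = (univ.filter fun p : Fin n × Fin n => ¬ Q p.1 p.2).card := by
  rw [(zeroOnAuxEquiv (k := k) Q).finrank_eq]
  simp [Module.finrank_pi, Fintype.card_subtype]

lemma mul_entry_of_le {A B : Matrix (Fin n) (Fin n) k}
    (hA : ∀ i j, j < i → A i j = 0) (hB : ∀ i j, j < i → B i j = 0)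
    {i j : Fin n} (hij : j ≤ i) : (A * B) i j = A i j * B j j := by
  rw [Matrix.mul_apply]
  apply Finset.sum_eq_single
  · intro l _ hl
    by_cases h : l < i
    · rw [hA i l h, zero_mul]
    · rw [hB l j (lt_of_le_of_ne (hij.trans (not_lt.mp h)) (Ne.symm hl)), mul_zero]
  · intro h
    exact absurd (Finset.mem_univ j) h

lemma comm_entry_eq_zero {A B : Matrix (Fin n) (Fin n) k}
    (hA : ∀ i j, j < i → A i j = 0) (hB : ∀ i j, j < i → B i j = 0)
    {i j : Fin n} (hij : j ≤ i) : (A * B - B * A) i j = 0 := by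
  rw [Matrix.sub_apply, mul_entry_of_le hA hB hij, mul_entry_of_le hB hA hij]
  rcases eq_or_lt_of_le hij with h | h
  · subst h; ring
  · rw [hA i j h, hB i j h]; ring

/-- equivalence between the product submodule and the product of submodules -/
def prodSubEquiv {M : Type*} [AddCommGroup M] [Module k M]
    (p q : Submodule k M) : (p.prod q) ≃ₗ[k] (p × q) where
  toFun x := (⟨x.1.1, x.2.1⟩, ⟨x.1.2, x.2.2⟩)
  map_add' a b := rfl
  map_smul' c a := rfl
  invFun x := ⟨(x.1.1, x.2.1), ⟨x.1.2, x.2.2⟩⟩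
  left_inv x := rfl
  right_inv x := rfl

end AuxCommScheme
open Finset

lemma card_diag (n : ℕ) :
    (univ.filter fun p : Fin n × Fin n => p.1 = p.2).card = n := by
  rw [show (univ.filter fun p : Fin n × Fin n => p.1 = p.2)
      = univ.image (fun i : Fin n => (i, i)) from ?_]
  · rw [Finset.card_image_of_injective _ (fun a b h => (Prod.ext_iff.mp h).1), card_univ,
      Fintype.card_fin]
  · ext ⟨i, j⟩
    simp only [mem_filter, mem_univ, true_and, mem_image]
    constructor
    · rintro rfl; exact ⟨i, rfl⟩
    · rintro ⟨a, ha⟩; cases ha; rfl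

lemma card_swap (n : ℕ) :
    (univ.filter fun p : Fin n × Fin n => p.2 < p.1).card
      = (univ.filter fun p : Fin n × Fin n => p.1 < p.2).card := by
  apply Finset.card_bij' (fun p _ => p.swap) (fun p _ => p.swap)
  · intro p _; rfl
  · intro p _; rfl
  · intro p hp; simp only [mem_filter, mem_univ, true_and] at hp ⊢; exact hp
  · intro p hp; simp only [mem_filter, mem_univ, true_and] at hp ⊢; exact hp

lemma card_upper_eq (n : ℕ) :
    (univ.filter fun p : Fin n × Fin n => ¬ p.2 < p.1).card
      = (univ.filter fun p : Fin n × Fin n => ¬ p.2 ≤ p.1).card + n := by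
  have h := Finset.card_filter_add_card_filter_not
    (s := univ.filter fun p : Fin n × Fin n => ¬ p.2 < p.1)
    (p := fun p : Fin n × Fin n => p.1 < p.2)
  rw [Finset.filter_filter, Finset.filter_filter] at h
  have h1 : (univ.filter fun p : Fin n × Fin n => ¬ p.2 < p.1 ∧ p.1 < p.2)
      = univ.filter fun p : Fin n × Fin n => ¬ p.2 ≤ p.1 := by
    apply Finset.filter_congr; intro p _
    constructor
    · rintro ⟨_, h2⟩; exact not_le.mpr h2
    · intro h2; exact ⟨fun h3 => absurd (le_of_lt h3) h2, not_le.mp h2⟩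
  have h2 : (univ.filter fun p : Fin n × Fin n => ¬ p.2 < p.1 ∧ ¬ p.1 < p.2)
      = univ.filter fun p : Fin n × Fin n => p.1 = p.2 := by
    apply Finset.filter_congr; intro p _
    constructor
    · rintro ⟨ha, hb⟩; exact le_antisymm (not_lt.mp ha) (not_lt.mp hb)
    · intro h3; rw [h3]; exact ⟨lt_irrefl _, lt_irrefl _⟩
  rw [h1, h2, card_diag] at h
  omega

lemma card_sum (n : ℕ) :
    (univ.filter fun p : Fin n × Fin n => ¬ p.2 < p.1).card
      + (univ.filter fun p : Fin n × Fin n => ¬ p.2 ≤ p.1).card + n = n * n + n := by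
  have h := Finset.card_filter_add_card_filter_not
    (s := (univ : Finset (Fin n × Fin n)))
    (p := fun p : Fin n × Fin n => p.2 < p.1)
  rw [card_univ, Fintype.card_prod, Fintype.card_fin] at h
  have h1 : (univ.filter fun p : Fin n × Fin n => p.2 < p.1).card
      = (univ.filter fun p : Fin n × Fin n => ¬ p.2 ≤ p.1).card := by
    rw [card_swap]
    congr 1
    apply Finset.filter_congr; intro p _
    simp [not_le]
  omega
lemma mem_borelCentralizer {k : Type*} [Field k] {n : ℕ} {X W : Matrix (Fin n) (Fin n) k} :
    W ∈ borelCentralizer X ↔ (∀ i j : Fin n, j < i → W i j = 0) ∧ W * X = X * W := Iff.rfl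

lemma mem_commSchemeTangent {k : Type*} [Field k] {n : ℕ}
    {X Y : Matrix (Fin n) (Fin n) k} {WZ : Matrix (Fin n) (Fin n) k × Matrix (Fin n) (Fin n) k} :
    WZ ∈ commSchemeTangent X Y ↔ (∀ i j : Fin n, j < i → WZ.1 i j = 0) ∧
      (∀ i j : Fin n, j < i → WZ.2 i j = 0) ∧
      (X * WZ.2 - WZ.2 * X) + (WZ.1 * Y - Y * WZ.1) = 0 := Iff.rfl

/-- Let `X` be an upper triangular `n × n` matrix over a field `k` whose centralizer in `b_n`
has dimension exactly `n` (i.e. `X` is regular in `b_n`).  Then for every upper triangular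
`Y`, the space `{(W,Z) ∈ b_n × b_n : [X,Z] + [W,Y] = 0}` — the tangent space of the
commuting scheme of `b_n` at `(X,Y)` — has dimension `n(n+1)/2 + n`. -/
theorem commScheme_tangent_dim_of_regular {k : Type*} [Field k] {n : ℕ}
    (X : Matrix (Fin n) (Fin n) k) (hX : ∀ i j : Fin n, j < i → X i j = 0)
    (hreg : Module.finrank k (borelCentralizer X) = n)
    (Y : Matrix (Fin n) (Fin n) k) (hY : ∀ i j : Fin n, j < i → Y i j = 0) :
    Module.finrank k (commSchemeTangent X Y) = n * (n + 1) / 2 + n := by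
  classical
  set Vb : Submodule k (Matrix (Fin n) (Fin n) k) := zeroOnAux (fun i j => j < i) with hVbdef
  set Vs : Submodule k (Matrix (Fin n) (Fin n) k) := zeroOnAux (fun i j => j ≤ i) with hVsdef
  set ad : Matrix (Fin n) (Fin n) k →ₗ[k] Matrix (Fin n) (Fin n) k :=
    LinearMap.mulLeft k X - LinearMap.mulRight k X with had
  set Φ : Matrix (Fin n) (Fin n) k × Matrix (Fin n) (Fin n) k →ₗ[k] Matrix (Fin n) (Fin n) k :=
    ad ∘ₗ LinearMap.snd k _ _
      + (LinearMap.mulRight k Y - LinearMap.mulLeft k Y) ∘ₗ LinearMap.fst k _ _ with hΦdef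
  have hadapp : ∀ Z, ad Z = X * Z - Z * X := by
    intro Z
    simp [had, LinearMap.sub_apply, LinearMap.mulLeft_apply, LinearMap.mulRight_apply]
  have hΦ : ∀ WZ : Matrix (Fin n) (Fin n) k × Matrix (Fin n) (Fin n) k,
      Φ WZ = (X * WZ.2 - WZ.2 * X) + (WZ.1 * Y - Y * WZ.1) := by
    intro WZ
    simp [hΦdef, had, LinearMap.sub_apply, LinearMap.mulLeft_apply, LinearMap.mulRight_apply]
  set adr : Vb →ₗ[k] Matrix (Fin n) (Fin n) k := ad.domRestrict Vb with hadr
  set Φr : (Vb.prod Vb) →ₗ[k] Matrix (Fin n) (Fin n) k := Φ.domRestrict (Vb.prod Vb) with hΦr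
  -- step 1: kernel of adr is the borel centralizer
  have hmapC : Submodule.map Vb.subtype (LinearMap.ker adr) = borelCentralizer X := by
    ext W
    simp only [Submodule.mem_map, LinearMap.mem_ker, mem_borelCentralizer]
    constructor
    · rintro ⟨⟨W', hW'⟩, hk, rfl⟩
      have hval : adr ⟨W', hW'⟩ = X * W' - W' * X := hadapp W'
      rw [hval, sub_eq_zero] at hk
      exact ⟨mem_zeroOnAux.mp hW', hk.symm⟩
    · rintro ⟨h1, h2⟩
      refine ⟨⟨W, mem_zeroOnAux.mpr h1⟩, ?_, rfl⟩
      have hval : adr ⟨W, mem_zeroOnAux.mpr h1⟩ = X * W - W * X := hadapp W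
      rw [hval, sub_eq_zero]
      exact h2.symm
  have hkerC : Module.finrank k (LinearMap.ker adr) = n := by
    rw [← hmapC, Submodule.finrank_map_subtype_eq] at hreg
    exact hreg
  -- numerology
  set cB := (Finset.univ.filter fun p : Fin n × Fin n => ¬ p.2 < p.1).card with hcB
  set cS := (Finset.univ.filter fun p : Fin n × Fin n => ¬ p.2 ≤ p.1).card with hcS
  have hVb_rank : Module.finrank k Vb = cB := finrank_zeroOnAux _
  have hVs_rank : Module.finrank k Vs = cS := finrank_zeroOnAux _
  have hc1 : cB = cS + n := card_upper_eq n
  have hc2 : cB + cS + n = n * n + n := card_sum n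
  -- step 2: adr maps onto Vs
  have hrange_ad_le : LinearMap.range adr ≤ Vs := by
    rintro _ ⟨⟨Z, hZ⟩, rfl⟩
    have hval : adr ⟨Z, hZ⟩ = X * Z - Z * X := hadapp Z
    rw [hval, mem_zeroOnAux]
    intro i j hji
    exact comm_entry_eq_zero hX (mem_zeroOnAux.mp hZ) hji
  have hrn_ad := LinearMap.finrank_range_add_finrank_ker adr
  have hrange_ad : LinearMap.range adr = Vs := by
    apply Submodule.eq_of_le_of_finrank_le hrange_ad_le
    rw [hVs_rank]
    rw [hkerC, hVb_rank] at hrn_ad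
    omega
  -- step 3: Φr maps onto Vs
  have hrangeΦ_le : LinearMap.range Φr ≤ Vs := by
    rintro _ ⟨⟨⟨W, Z⟩, hWZ⟩, rfl⟩
    have hW : W ∈ Vb := (Submodule.mem_prod.mp hWZ).1
    have hZ : Z ∈ Vb := (Submodule.mem_prod.mp hWZ).2
    have hval : Φr ⟨(W, Z), hWZ⟩ = (X * Z - Z * X) + (W * Y - Y * W) := hΦ (W, Z)
    rw [hval, mem_zeroOnAux]
    intro i j hji
    rw [Matrix.add_apply, comm_entry_eq_zero hX (mem_zeroOnAux.mp hZ) hji,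
      comm_entry_eq_zero (mem_zeroOnAux.mp hW) hY hji, add_zero]
  have hrangeΦ : LinearMap.range Φr = Vs := by
    refine le_antisymm hrangeΦ_le ?_
    rw [← hrange_ad]
    rintro _ ⟨⟨Z, hZ⟩, rfl⟩
    refine ⟨⟨(0, Z), Submodule.mem_prod.mpr ⟨Vb.zero_mem, hZ⟩⟩, ?_⟩
    have hval : Φr ⟨(0, Z), Submodule.mem_prod.mpr ⟨Vb.zero_mem, hZ⟩⟩
        = (X * Z - Z * X) + ((0 : Matrix (Fin n) (Fin n) k) * Y - Y * 0) := hΦ (0, Z)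
    have hval2 : adr ⟨Z, hZ⟩ = X * Z - Z * X := hadapp Z
    rw [hval, hval2]
    simp
  -- step 4: kernel of Φr is the tangent space
  have hmapT : Submodule.map (Vb.prod Vb).subtype (LinearMap.ker Φr) = commSchemeTangent X Y := by
    ext WZ
    simp only [Submodule.mem_map, LinearMap.mem_ker, mem_commSchemeTangent]
    constructor
    · rintro ⟨⟨⟨W, Z⟩, hWZ⟩, hk, rfl⟩
      have hval : Φr ⟨(W, Z), hWZ⟩ = (X * Z - Z * X) + (W * Y - Y * W) := hΦ (W, Z)
      rw [hval] at hk
      exact ⟨mem_zeroOnAux.mp (Submodule.mem_prod.mp hWZ).1,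
        mem_zeroOnAux.mp (Submodule.mem_prod.mp hWZ).2, hk⟩
    · rintro ⟨h1, h2, h3⟩
      refine ⟨⟨WZ, Submodule.mem_prod.mpr ⟨mem_zeroOnAux.mpr h1, mem_zeroOnAux.mpr h2⟩⟩, ?_, rfl⟩
      have hval : Φr ⟨WZ, Submodule.mem_prod.mpr ⟨mem_zeroOnAux.mpr h1, mem_zeroOnAux.mpr h2⟩⟩
          = (X * WZ.2 - WZ.2 * X) + (WZ.1 * Y - Y * WZ.1) := hΦ WZ
      rw [hval]
      exact h3
  have hT : Module.finrank k (commSchemeTangent X Y)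
      = Module.finrank k (LinearMap.ker Φr) := by
    rw [← hmapT, Submodule.finrank_map_subtype_eq]
  -- rank-nullity for Φr
  have hprod : Module.finrank k (Vb.prod Vb) = cB + cB := by
    rw [(prodSubEquiv Vb Vb).finrank_eq, Module.finrank_prod, hVb_rank]
  have hrn := LinearMap.finrank_range_add_finrank_ker Φr
  rw [hrangeΦ, hVs_rank, hprod] at hrn
  -- final arithmetic
  obtain ⟨m, hm⟩ : ∃ m, n * n = m := ⟨_, rfl⟩
  rw [hm] at hc2
  have hgauss : n * (n + 1) = 2 * cB := by
    have e1 : n * (n + 1) = n * n + n := by ring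
    rw [e1, hm]; omega
  rw [hT, hgauss]
  omega
end
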